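/- Noise robustness for CS[d,k] (Corollary 1): Let d, k ≥ 2 and let P_NL be a no-signalling correlation with Alice inputs Fin X, Alice outputs Fin A, Bob inputs Fin d, Bob outputs Fin k, lying on a non-local facet. Let P_WN denote the white-noise correlation P_WN x y a b = 1/(A·k). If 1 - 1/k^{d-1} < p ≤ 1, then there exists a (p·P_NL + (1-p)·P_WN)-assisted wire-reading strategy for CS[d,k] whose payoff satisfies S_W(𝒩) > 1 - 1/k^d (the shared-randomness bound). -/

import Mathlib

open Finset

/-- The payoff of the task CS[d,k] for the wire-reading conditional distribution
`𝒩 τ' n m = 𝒩(τ',n|m)`. -/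
noncomputable def CSPayoff (d k : ℕ) (𝒩 : Fin d → Fin k → (Fin d → Fin k) → ℝ) : ℝ :=
  (1 / (k : ℝ) ^ d) * ∑ m : Fin d → Fin k, ∑ τ' : Fin d,
    ∑ n ∈ Finset.univ.filter (fun n : Fin k => n ≠ m τ'), 𝒩 τ' n m

/-- Noise robustness for CS[d,k] (Corollary 1): for `1 - 1/k^(d-1) < p ≤ 1`,
a noisy non-local facet correlation `p·P_NL + (1-p)·P_WN` still beats the
shared-randomness bound `1 - 1/k^d`. -/
theorem noisy_nonlocal_facet_advantage_CS
    (d k X A : ℕ) (hd : 2 ≤ d) (hk : 2 ≤ k)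
    (PNL : Fin X → Fin d → Fin A → Fin k → ℝ)
    (hP0 : ∀ x y a b, 0 ≤ PNL x y a b)
    (hP1 : ∀ x y, ∑ a : Fin A, ∑ b : Fin k, PNL x y a b = 1)
    (hNSA : ∀ x a y₁ y₂, ∑ b : Fin k, PNL x y₁ a b = ∑ b : Fin k, PNL x y₂ a b)
    (hNSB : ∀ y b x₁ x₂, ∑ a : Fin A, PNL x₁ y a b = ∑ a : Fin A, PNL x₂ y a b)
    (hfacet : ∀ (LA : Fin X → Fin A) (LB : Fin d → Fin k),
      ¬ ∃ (q : ℝ) (Q : Fin X → Fin d → Fin A → Fin k → ℝ),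
        0 < q ∧ q ≤ 1 ∧
        (∀ x y a b, 0 ≤ Q x y a b) ∧
        (∀ x y, ∑ a : Fin A, ∑ b : Fin k, Q x y a b = 1) ∧
        (∀ x a y₁ y₂, ∑ b : Fin k, Q x y₁ a b = ∑ b : Fin k, Q x y₂ a b) ∧
        (∀ y b x₁ x₂, ∑ a : Fin A, Q x₁ y a b = ∑ a : Fin A, Q x₂ y a b) ∧
        (∀ x y a b, PNL x y a b =
          q * (if a = LA x ∧ b = LB y then 1 else 0) + (1 - q) * Q x y a b))
    (p : ℝ) (hp1 : 1 - 1 / (k : ℝ) ^ (d - 1) < p) (hp2 : p ≤ 1) :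
    ∃ (px : Fin X → (Fin d → Fin k) → ℝ)
      (pe : Fin d → Fin A → (Fin d → Fin k) → ℝ)
      (py : Fin d → Fin d → ℝ)
      (pd : Fin k → Fin d → Fin k → ℝ),
      (∀ x m, 0 ≤ px x m) ∧ (∀ m, ∑ x : Fin X, px x m = 1) ∧
      (∀ τ' a m, 0 ≤ pe τ' a m) ∧ (∀ a m, ∑ τ' : Fin d, pe τ' a m = 1) ∧
      (∀ y τ', 0 ≤ py y τ') ∧ (∀ τ', ∑ y : Fin d, py y τ' = 1) ∧
      (∀ n τ' b, 0 ≤ pd n τ' b) ∧ (∀ τ' b, ∑ n : Fin k, pd n τ' b = 1) ∧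
      CSPayoff d k (fun τ' n m =>
        ∑ x : Fin X, ∑ a : Fin A, ∑ y : Fin d, ∑ b : Fin k,
          px x m * pe τ' a m * py y τ' *
            (p * PNL x y a b + (1 - p) * (1 / ((A : ℝ) * (k : ℝ)))) * pd n τ' b)
        > 1 - 1 / (k : ℝ) ^ d := by
  classical
  have hd0 : 0 < d := by omega
  have hk0 : 0 < k := by omega
  have hkR : (0:ℝ) < (k:ℝ) := by exact_mod_cast hk0
  -- X must be positive
  have hX : 0 < X := by
    rcases Nat.eq_zero_or_pos X with h0 | h; swap; · exact h
    subst h0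
    exact absurd ⟨1, PNL, one_pos, le_refl 1, fun x => x.elim0, fun x => x.elim0,
      fun x => x.elim0, fun y b x₁ => x₁.elim0, fun x => x.elim0⟩
      (hfacet (fun x => x.elim0) (fun _ => ⟨0, by omega⟩))
  -- A must be positive
  have hA : 0 < A := by
    rcases Nat.eq_zero_or_pos A with h0 | h; swap; · exact h
    subst h0
    have := hP1 ⟨0, hX⟩ ⟨0, hd0⟩
    simp at this
  have hAR : (0:ℝ) < (A:ℝ) := by exact_mod_cast hA
  -- entries are at most 1
  have hle1 : ∀ x y a b, PNL x y a b ≤ 1 := by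
    intro x y a b
    calc PNL x y a b ≤ ∑ b' : Fin k, PNL x y a b' :=
          Finset.single_le_sum (fun i _ => hP0 x y a i) (mem_univ b)
      _ ≤ ∑ a' : Fin A, ∑ b' : Fin k, PNL x y a' b' :=
          Finset.single_le_sum
            (fun i _ => Finset.sum_nonneg fun j _ => hP0 x y i j) (mem_univ a)
      _ = 1 := hP1 x y
  -- the facet condition forces a zero on every local deterministic pattern
  have facetZero : ∀ (LA : Fin X → Fin A) (LB : Fin d → Fin k),
      ∃ x y, PNL x y (LA x) (LB y) = 0 := by
    intro LA LB
    by_contra hcon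
    push_neg at hcon
    have hpos : ∀ x y, 0 < PNL x y (LA x) (LB y) :=
      fun x y => lt_of_le_of_ne (hP0 _ _ _ _) (Ne.symm (hcon x y))
    obtain ⟨⟨x0, y0⟩, -, hmin⟩ := Finset.exists_min_image
      (univ : Finset (Fin X × Fin d)) (fun pr => PNL pr.1 pr.2 (LA pr.1) (LB pr.2))
      ⟨(⟨0, hX⟩, ⟨0, hd0⟩), mem_univ _⟩
    set q : ℝ := PNL x0 y0 (LA x0) (LB y0) / 2 with hqdef
    have hq0 : 0 < q := half_pos (hpos x0 y0)
    have hq1 : q < 1 := by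
      have := hle1 x0 y0 (LA x0) (LB y0)
      rw [hqdef]; linarith
    have h1q : (0:ℝ) < 1 - q := by linarith
    have hite : ∀ x y, ∑ a : Fin A, ∑ b : Fin k,
        (if a = LA x ∧ b = LB y then (1:ℝ) else 0) = 1 := by
      intro x y
      simp [ite_and, Finset.sum_ite_eq']
    have hiteB : ∀ (x : Fin X) (y : Fin d) (a : Fin A), ∑ b : Fin k,
        (if a = LA x ∧ b = LB y then (1:ℝ) else 0) = if a = LA x then 1 else 0 := by
      intro x y a
      by_cases h : a = LA x <;> simp [ite_and, h, Finset.sum_ite_eq']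
    have hiteA : ∀ (x : Fin X) (y : Fin d) (b : Fin k), ∑ a : Fin A,
        (if a = LA x ∧ b = LB y then (1:ℝ) else 0) = if b = LB y then 1 else 0 := by
      intro x y b
      by_cases h : b = LB y <;> simp [ite_and, h, Finset.sum_ite_eq']
    apply hfacet LA LB
    refine ⟨q, fun x y a b =>
      (PNL x y a b - q * (if a = LA x ∧ b = LB y then 1 else 0)) / (1 - q),
      hq0, le_of_lt hq1, ?_, ?_, ?_, ?_, ?_⟩
    · intro x y a b
      apply div_nonneg _ (le_of_lt h1q)
      by_cases hc : a = LA x ∧ b = LB y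
      · obtain ⟨ha, hb⟩ := hc
        subst ha; subst hb
        have h2q := hmin (x, y) (mem_univ _)
        simp only at h2q
        rw [if_pos ⟨rfl, rfl⟩, mul_one]
        have := hpos x0 y0
        rw [hqdef]
        linarith
      · simp only [hc, if_neg, not_false_iff, mul_zero, sub_zero]
        exact hP0 x y a b
    · intro x y
      simp only [← Finset.sum_div]
      rw [show (∑ a : Fin A, ∑ b : Fin k,
          (PNL x y a b - q * (if a = LA x ∧ b = LB y then 1 else 0)))
          = (∑ a : Fin A, ∑ b : Fin k, PNL x y a b)
            - q * ∑ a : Fin A, ∑ b : Fin k,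
              (if a = LA x ∧ b = LB y then (1:ℝ) else 0) by
        rw [Finset.mul_sum]
        rw [← Finset.sum_sub_distrib]
        refine Finset.sum_congr rfl fun a _ => ?_
        rw [Finset.mul_sum, ← Finset.sum_sub_distrib]]
      rw [hP1 x y, hite x y, mul_one]
      field_simp
    · intro x a y₁ y₂
      have e : ∀ y : Fin d, ∑ b : Fin k,
          (PNL x y a b - q * (if a = LA x ∧ b = LB y then 1 else 0)) / (1 - q)
          = ((∑ b : Fin k, PNL x y a b) - q * (if a = LA x then 1 else 0)) / (1 - q) := by
        intro y
        rw [← Finset.sum_div, Finset.sum_sub_distrib, ← Finset.mul_sum, hiteB x y a]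
      rw [e y₁, e y₂, hNSA x a y₁ y₂]
    · intro y b x₁ x₂
      have e : ∀ x : Fin X, ∑ a : Fin A,
          (PNL x y a b - q * (if a = LA x ∧ b = LB y then 1 else 0)) / (1 - q)
          = ((∑ a : Fin A, PNL x y a b) - q * (if b = LB y then 1 else 0)) / (1 - q) := by
        intro x
        rw [← Finset.sum_div, Finset.sum_sub_distrib, ← Finset.mul_sum, hiteA x y b]
      rw [e x₁, e x₂, hNSB y b x₁ x₂]
    · intro x y a b
      field_simp
      ring
  -- key combinatorial consequence
  have key : ∀ m : Fin d → Fin k, ∃ x : Fin X, ∀ a : Fin A,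
      ∃ y : Fin d, PNL x y a (m y) = 0 := by
    intro m
    by_contra hcon
    push_neg at hcon
    choose LA hLA using hcon
    obtain ⟨x, y, hxy⟩ := facetZero LA m
    exact hLA x y hxy
  choose XF hXF using key
  choose T hT using hXF
  set c : ℝ := (1 - p) * (1 / ((A : ℝ) * (k : ℝ))) with hc
  set y₀ : Fin d := ⟨0, hd0⟩
  refine ⟨fun x m => if x = XF m then 1 else 0,
          fun τ' a m => if τ' = T m a then 1 else 0,
          fun y τ' => if y = τ' then 1 else 0,
          fun n τ' b => if n = b then 1 else 0,
          ?_, ?_, ?_, ?_, ?_, ?_, ?_, ?_, ?_⟩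
  · intro x m; exact ite_nonneg zero_le_one le_rfl
  · intro m; simp
  · intro τ' a m; exact ite_nonneg zero_le_one le_rfl
  · intro a m; simp
  · intro y τ'; exact ite_nonneg zero_le_one le_rfl
  · intro τ'; simp
  · intro n τ' b; exact ite_nonneg zero_le_one le_rfl
  · intro τ' b; simp
  -- payoff computation
  have key2 : ∀ m : Fin d → Fin k,
      (∑ τ' : Fin d, ∑ n ∈ Finset.univ.filter (fun n : Fin k => n ≠ m τ'),
        ∑ x : Fin X, ∑ a : Fin A, ∑ y : Fin d, ∑ b : Fin k,
          (if x = XF m then (1:ℝ) else 0) * (if τ' = T m a then 1 else 0)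
            * (if y = τ' then 1 else 0)
            * (p * PNL x y a b + (1 - p) * (1 / ((A : ℝ) * (k : ℝ))))
            * (if n = b then 1 else 0))
      = p + (A : ℝ) * (((k : ℝ) - 1) * c) := by
    intro m
    have hcol : ∀ (τ' : Fin d) (n : Fin k),
        (∑ x : Fin X, ∑ a : Fin A, ∑ y : Fin d, ∑ b : Fin k,
          (if x = XF m then (1:ℝ) else 0) * (if τ' = T m a then 1 else 0)
            * (if y = τ' then 1 else 0)
            * (p * PNL x y a b + (1 - p) * (1 / ((A : ℝ) * (k : ℝ))))
            * (if n = b then 1 else 0))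
        = ∑ a : Fin A, (if τ' = T m a then p * PNL (XF m) τ' a n + c else 0) := by
      intro τ' n
      simp only [ite_mul, mul_ite, one_mul, zero_mul, mul_zero, mul_one,
        Finset.sum_ite_irrel, Finset.sum_ite_eq, Finset.sum_ite_eq',
        Finset.mem_univ, if_true, Finset.sum_const_zero, hc]
      rw [Finset.sum_comm]
      refine Finset.sum_congr rfl fun a _ => ?_
      by_cases h : τ' = T m a <;> simp [h, Finset.sum_ite_eq']
    calc (∑ τ' : Fin d, ∑ n ∈ Finset.univ.filter (fun n : Fin k => n ≠ m τ'),
        ∑ x : Fin X, ∑ a : Fin A, ∑ y : Fin d, ∑ b : Fin k,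
          (if x = XF m then (1:ℝ) else 0) * (if τ' = T m a then 1 else 0)
            * (if y = τ' then 1 else 0)
            * (p * PNL x y a b + (1 - p) * (1 / ((A : ℝ) * (k : ℝ))))
            * (if n = b then 1 else 0))
        = ∑ τ' : Fin d, ∑ n ∈ Finset.univ.filter (fun n : Fin k => n ≠ m τ'),
            ∑ a : Fin A, (if τ' = T m a then p * PNL (XF m) τ' a n + c else 0) := by
          exact Finset.sum_congr rfl fun τ' _ =>
            Finset.sum_congr rfl fun n _ => hcol τ' n
      _ = ∑ τ' : Fin d, ∑ a : Fin A,
            ∑ n ∈ Finset.univ.filter (fun n : Fin k => n ≠ m τ'),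
              (if τ' = T m a then p * PNL (XF m) τ' a n + c else 0) :=
          Finset.sum_congr rfl fun τ' _ => Finset.sum_comm
      _ = ∑ a : Fin A, ∑ τ' : Fin d,
            ∑ n ∈ Finset.univ.filter (fun n : Fin k => n ≠ m τ'),
              (if τ' = T m a then p * PNL (XF m) τ' a n + c else 0) :=
          Finset.sum_comm
      _ = ∑ a : Fin A, ∑ τ' : Fin d,
            (if τ' = T m a then
              ∑ n ∈ Finset.univ.filter (fun n : Fin k => n ≠ m τ'),
                (p * PNL (XF m) τ' a n + c) else 0) := by
          refine Finset.sum_congr rfl fun a _ => Finset.sum_congr rfl fun τ' _ => ?_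
          split <;> simp
      _ = ∑ a : Fin A,
            ∑ n ∈ Finset.univ.filter (fun n : Fin k => n ≠ m (T m a)),
              (p * PNL (XF m) (T m a) a n + c) := by
          refine Finset.sum_congr rfl fun a _ => ?_
          simp [Finset.sum_ite_eq']
      _ = ∑ a : Fin A, (p * ∑ b : Fin k, PNL (XF m) y₀ a b + ((k : ℝ) - 1) * c) := by
          refine Finset.sum_congr rfl fun a _ => ?_
          rw [Finset.sum_add_distrib, Finset.sum_const, ← Finset.mul_sum]
          have hfil : Finset.univ.filter (fun n : Fin k => n ≠ m (T m a))
              = Finset.univ.erase (m (T m a)) := by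
            ext n; simp [Finset.mem_erase, and_comm]
          rw [hfil, Finset.sum_erase_eq_sub (mem_univ _), hT m a, sub_zero,
            Finset.card_erase_of_mem (mem_univ _), Finset.card_univ,
            Fintype.card_fin, hNSA (XF m) a (T m a) y₀]
          have : ((k - 1 : ℕ) : ℝ) = (k : ℝ) - 1 := by
            push_cast [Nat.cast_sub (by omega : 1 ≤ k)]; ring
          rw [nsmul_eq_mul, this]
      _ = p + (A : ℝ) * (((k : ℝ) - 1) * c) := by
          rw [Finset.sum_add_distrib, ← Finset.mul_sum, hP1 (XF m) y₀,
            Finset.sum_const, Finset.card_univ, Fintype.card_fin, mul_one,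
            nsmul_eq_mul]
  have main : CSPayoff d k (fun τ' n m =>
      ∑ x : Fin X, ∑ a : Fin A, ∑ y : Fin d, ∑ b : Fin k,
        (if x = XF m then (1:ℝ) else 0) * (if τ' = T m a then 1 else 0)
          * (if y = τ' then 1 else 0)
          * (p * PNL x y a b + (1 - p) * (1 / ((A : ℝ) * (k : ℝ))))
          * (if n = b then 1 else 0))
      = p + (A : ℝ) * (((k : ℝ) - 1) * c) := by
    unfold CSPayoff
    rw [Finset.sum_congr rfl fun m _ => key2 m, Finset.sum_const,
      Finset.card_univ, nsmul_eq_mul]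
    have hcard : (Fintype.card (Fin d → Fin k) : ℝ) = (k : ℝ) ^ d := by
      simp [Fintype.card_fun]
    rw [hcard]
    have : (k : ℝ) ^ d ≠ 0 := by positivity
    field_simp
  refine lt_of_lt_of_le ?_ (le_of_eq main.symm)
  -- arithmetic: 1 - 1/k^d < p + A*((k-1)*c)
  have hAc : (A : ℝ) * (((k : ℝ) - 1) * c) = ((k : ℝ) - 1) * (1 - p) / (k : ℝ) := by
    rw [hc]; field_simp
  rw [hAc]
  have hkd1 : (0:ℝ) < (k : ℝ) ^ (d - 1) := by positivity
  have hpow : (k : ℝ) ^ (d - 1) * (k : ℝ) = (k : ℝ) ^ d := by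
    rw [← pow_succ]; congr 1; omega
  have h1 : (1 - p) * (k : ℝ) ^ (d - 1) < 1 := by
    have : 1 - p < 1 / (k : ℝ) ^ (d - 1) := by linarith
    calc (1 - p) * (k : ℝ) ^ (d - 1) < (1 / (k : ℝ) ^ (d - 1)) * (k : ℝ) ^ (d - 1) := by
          apply mul_lt_mul_of_pos_right this hkd1
      _ = 1 := by field_simp
  have h2 : (1 - p) / (k : ℝ) < 1 / (k : ℝ) ^ d := by
    rw [div_lt_div_iff₀ hkR (by positivity)]
    calc (1 - p) * (k : ℝ) ^ d = ((1 - p) * (k : ℝ) ^ (d - 1)) * (k : ℝ) := by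
          rw [mul_assoc, hpow]
      _ < 1 * (k : ℝ) := mul_lt_mul_of_pos_right h1 hkR
      _ = 1 * (k : ℝ) := rfl
  have heq : p + ((k : ℝ) - 1) * (1 - p) / (k : ℝ) = 1 - (1 - p) / (k : ℝ) := by
    field_simp; ring
  rw [heq]
  linarith
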